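/- If A is a finite set of positive reals with |A| ≥ 2 and |AA| ≤ |A|^{1+ε}, then |A+A| ≥ |A|^{(3-ε)/2} / (2⌈log₂|A|⌉^{1/2}). -/

import Mathlib

open Finset Pointwise

noncomputable def Pt (A : Finset ℝ) (s : ℝ) : Finset (ℝ × ℝ) :=
  (A ×ˢ A).filter (fun p => p.2 / p.1 = s)

noncomputable def rr (A : Finset ℝ) (s : ℝ) : ℕ := (Pt A s).card

lemma slope_mem (A : Finset ℝ) {p : ℝ × ℝ} (hp : p ∈ A ×ˢ A) : p.2 / p.1 ∈ A / A := by
  rw [Finset.mem_product] at hp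
  exact Finset.div_mem_div hp.2 hp.1

-- sum of rr over A/A is n^2
lemma sum_rr (A : Finset ℝ) : ∑ s ∈ A / A, rr A s = A.card ^ 2 := by
  rw [sq, ← Finset.card_product]
  exact (Finset.card_eq_sum_card_fiberwise (fun p hp => slope_mem A hp)).symm

-- the energy as a quadruple count
noncomputable def En (A : Finset ℝ) : Finset ((ℝ × ℝ) × ℝ × ℝ) :=
  ((A ×ˢ A) ×ˢ (A ×ˢ A)).filter (fun q => q.1.2 / q.1.1 = q.2.2 / q.2.1)

lemma sum_rr_sq (A : Finset ℝ) : ∑ s ∈ A / A, rr A s ^ 2 = (En A).card := by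
  rw [Finset.card_eq_sum_card_fiberwise (f := fun q => q.1.2 / q.1.1) (t := A / A)
    (fun q hq => by
      rw [Finset.mem_coe, En, Finset.mem_filter, Finset.mem_product] at hq
      exact slope_mem A hq.1.1)]
  refine Finset.sum_congr rfl fun s _ => ?_
  rw [sq, rr, ← Finset.card_product]
  congr 1
  ext q
  simp only [En, Pt, Finset.mem_filter, Finset.mem_product]
  constructor
  · rintro ⟨⟨m1, e1⟩, m2, e2⟩
    exact ⟨⟨⟨m1, m2⟩, e1.trans e2.symm⟩, e1⟩
  · rintro ⟨⟨⟨m1, m2⟩, e⟩, e1⟩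
    exact ⟨⟨m1, e1⟩, m2, e ▸ e1⟩

noncomputable def mm (A : Finset ℝ) (x : ℝ) : ℕ :=
  ((A ×ˢ A).filter (fun p => p.1 * p.2 = x)).card

noncomputable def En' (A : Finset ℝ) : Finset ((ℝ × ℝ) × ℝ × ℝ) :=
  ((A ×ˢ A) ×ˢ (A ×ˢ A)).filter (fun q => q.1.1 * q.1.2 = q.2.1 * q.2.2)

lemma prod_mem' (A : Finset ℝ) {p : ℝ × ℝ} (hp : p ∈ A ×ˢ A) : p.1 * p.2 ∈ A * A := by
  rw [Finset.mem_product] at hp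
  exact Finset.mul_mem_mul hp.1 hp.2

lemma sum_mm (A : Finset ℝ) : ∑ x ∈ A * A, mm A x = A.card ^ 2 := by
  rw [sq, ← Finset.card_product]
  exact (Finset.card_eq_sum_card_fiberwise (fun p hp => prod_mem' A hp)).symm

lemma sum_mm_sq (A : Finset ℝ) : ∑ x ∈ A * A, mm A x ^ 2 = (En' A).card := by
  rw [Finset.card_eq_sum_card_fiberwise (f := fun q => q.1.1 * q.1.2) (t := A * A)
    (fun q hq => by
      rw [Finset.mem_coe, En', Finset.mem_filter, Finset.mem_product] at hq
      exact prod_mem' A hq.1.1)]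
  refine Finset.sum_congr rfl fun s _ => ?_
  rw [sq, mm, ← Finset.card_product]
  congr 1
  ext q
  simp only [En', Finset.mem_filter, Finset.mem_product]
  constructor
  · rintro ⟨⟨m1, e1⟩, m2, e2⟩
    exact ⟨⟨⟨m1, m2⟩, e1.trans e2.symm⟩, e1⟩
  · rintro ⟨⟨⟨m1, m2⟩, e⟩, e1⟩
    exact ⟨⟨m1, e1⟩, m2, e ▸ e1⟩

lemma card_En'_eq (A : Finset ℝ) (hA : ∀ a ∈ A, 0 < a) : (En' A).card = (En A).card := by
  refine Finset.card_nbij' (fun q => ((q.2.1, q.1.2), (q.1.1, q.2.2)))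
    (fun q => ((q.2.1, q.1.2), (q.1.1, q.2.2))) ?_ ?_ ?_ ?_
  · rintro ⟨⟨a, b⟩, c, d⟩ hq
    simp only [Finset.mem_coe, En', En, Finset.mem_filter, Finset.mem_product] at hq ⊢
    obtain ⟨⟨⟨ha, hb⟩, hc, hd⟩, e⟩ := hq
    refine ⟨⟨⟨hc, hb⟩, ha, hd⟩, ?_⟩
    rw [div_eq_div_iff (hA c hc).ne' (hA a ha).ne']
    linarith [e]
  · rintro ⟨⟨a, b⟩, c, d⟩ hq
    simp only [Finset.mem_coe, En', En, Finset.mem_filter, Finset.mem_product] at hq ⊢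
    obtain ⟨⟨⟨ha, hb⟩, hc, hd⟩, e⟩ := hq
    rw [div_eq_div_iff (hA a ha).ne' (hA c hc).ne'] at e
    exact ⟨⟨⟨hc, hb⟩, ha, hd⟩, by linarith [e]⟩
  · rintro ⟨⟨a, b⟩, c, d⟩ _; rfl
  · rintro ⟨⟨a, b⟩, c, d⟩ _; rfl

lemma cauchy_schwarz (A : Finset ℝ) (hA : ∀ a ∈ A, 0 < a) :
    A.card ^ 4 ≤ (A * A).card * ∑ s ∈ A / A, rr A s ^ 2 := by
  rw [sum_rr_sq, ← card_En'_eq A hA, ← sum_mm_sq]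
  calc A.card ^ 4 = (∑ x ∈ A * A, mm A x) ^ 2 := by rw [sum_mm]; ring
    _ ≤ (A * A).card * ∑ x ∈ A * A, mm A x ^ 2 := sq_sum_le_card_mul_sum_sq

lemma mem_Pt (A : Finset ℝ) (hA : ∀ a ∈ A, 0 < a) {s : ℝ} {p : ℝ × ℝ} (hp : p ∈ Pt A s) :
    p.1 ∈ A ∧ p.2 ∈ A ∧ 0 < p.1 ∧ p.2 = s * p.1 := by
  rw [Pt, Finset.mem_filter, Finset.mem_product] at hp
  obtain ⟨⟨h1, h2⟩, he⟩ := hp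
  have hpos := hA _ h1
  refine ⟨h1, h2, hpos, ?_⟩
  field_simp at he
  linarith [he]

lemma card_Pt_add (A : Finset ℝ) (hA : ∀ a ∈ A, 0 < a) {s t : ℝ} (hst : s ≠ t) :
    (Pt A s + Pt A t).card = rr A s * rr A t := by
  have hinj : Set.InjOn (fun p : (ℝ × ℝ) × (ℝ × ℝ) => p.1 + p.2)
      ((Pt A s ×ˢ Pt A t : Finset _) : Set _) := by
    rintro ⟨u, v⟩ huv ⟨u', v'⟩ huv' he
    rw [Finset.mem_coe, Finset.mem_product] at huv huv'
    obtain ⟨_, _, hu1, hu2⟩ := mem_Pt A hA huv.1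
    obtain ⟨_, _, hv1, hv2⟩ := mem_Pt A hA huv.2
    obtain ⟨_, _, hu1', hu2'⟩ := mem_Pt A hA huv'.1
    obtain ⟨_, _, hv1', hv2'⟩ := mem_Pt A hA huv'.2
    simp only [Prod.ext_iff, Prod.fst_add, Prod.snd_add] at he ⊢
    obtain ⟨e1, e2⟩ := he
    dsimp only at hu2 hv2 hu2' hv2'
    rw [hu2, hv2, hu2', hv2'] at e2
    have key : (t - s) * (v'.1 - v.1) = 0 := by linear_combination s * e1 - e2
    have hv : v.1 = v'.1 := by
      rcases mul_eq_zero.mp key with h | h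
      · exact absurd (by linarith : s = t) hst
      · linarith
    have hu : u.1 = u'.1 := by linarith
    exact ⟨⟨hu, by rw [hu2, hu2', hu]⟩, hv, by rw [hv2, hv2', hv]⟩
  rw [Finset.add_def, Finset.card_image_of_injOn hinj, Finset.card_product]
  rfl

lemma Pt_add_subset (A : Finset ℝ) {s t : ℝ} :
    Pt A s + Pt A t ⊆ (A + A) ×ˢ (A + A) := by
  intro p hp
  rw [Finset.mem_add] at hp
  obtain ⟨u, hu, v, hv, rfl⟩ := hp
  rw [Pt, Finset.mem_filter, Finset.mem_product] at hu hv
  rw [Finset.mem_product]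
  exact ⟨Finset.add_mem_add hu.1.1 hv.1.1, Finset.add_mem_add hu.1.2 hv.1.2⟩

lemma slope_between (A : Finset ℝ) (hA : ∀ a ∈ A, 0 < a) {s t : ℝ} (hst : s < t)
    {p : ℝ × ℝ} (hp : p ∈ Pt A s + Pt A t) : s < p.2 / p.1 ∧ p.2 / p.1 < t := by
  rw [Finset.mem_add] at hp
  obtain ⟨u, hu, v, hv, rfl⟩ := hp
  obtain ⟨_, _, hu1, hu2⟩ := mem_Pt A hA hu
  obtain ⟨_, _, hv1, hv2⟩ := mem_Pt A hA hv
  have hx : (0:ℝ) < u.1 + v.1 := by linarith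
  rw [Prod.snd_add, Prod.fst_add, hu2, hv2]
  constructor
  · rw [lt_div_iff₀ hx]; nlinarith
  · rw [div_lt_iff₀ hx]; nlinarith

lemma rr_le_card (A : Finset ℝ) (hA : ∀ a ∈ A, 0 < a) (s : ℝ) : rr A s ≤ A.card := by
  refine Finset.card_le_card_of_injOn (fun p => p.1)
    (fun p hp => (mem_Pt A hA hp).1) ?_
  intro p hp q hq h
  obtain ⟨_, _, _, hp2⟩ := mem_Pt A hA hp
  obtain ⟨_, _, _, hq2⟩ := mem_Pt A hA hq
  simp only [Finset.mem_coe] at *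
  exact Prod.ext h (by rw [hp2, hq2, h])

lemma rr_pos (A : Finset ℝ) {s : ℝ} (hs : s ∈ A / A) : 1 ≤ rr A s := by
  rw [Finset.mem_div] at hs
  obtain ⟨a, ha, b, hb, rfl⟩ := hs
  refine Finset.card_pos.mpr ⟨(b, a), ?_⟩
  rw [Pt, Finset.mem_filter, Finset.mem_product]
  exact ⟨⟨hb, ha⟩, rfl⟩

theorem solymosi (A : Finset ℝ) (hA : ∀ a ∈ A, 0 < a) (h2 : 2 ≤ A.card) :
    A.card ^ 4 ≤ 4 * Nat.clog 2 A.card * ((A * A).card * (A + A).card ^ 2) := by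
  classical
  set n := A.card with hn
  set L := Nat.clog 2 n with hLdef
  set S := (A + A).card with hS
  have hL : 1 ≤ L := Nat.clog_pos one_lt_two h2
  have hn2L : n ≤ 2 ^ L := Nat.le_pow_clog one_lt_two n
  have hnS : n ≤ S := Finset.card_le_card_add_left (Finset.card_pos.mp (by omega))
  set E := ∑ s ∈ A / A, rr A s ^ 2 with hE
  have hCS : n ^ 4 ≤ (A * A).card * E := cauchy_schwarz A hA
  have hEpos : 0 < E := by
    rcases Nat.eq_zero_or_pos E with h | h
    · exfalso
      rw [h, mul_zero, Nat.le_zero, pow_eq_zero_iff (by norm_num)] at hCS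
      omega
    · exact h
  -- dyadic classes
  set c : ℝ → ℕ := fun s => min (Nat.log 2 (rr A s)) (L - 1) with hc
  have hmaps : ∀ s ∈ A / A, c s ∈ Finset.range L := fun s _ =>
    Finset.mem_range.mpr (by simp only [hc]; omega)
  have hfib : ∑ k ∈ Finset.range L, ∑ s ∈ (A / A).filter (fun s => c s = k), rr A s ^ 2 = E :=
    Finset.sum_fiberwise_of_maps_to hmaps _
  obtain ⟨k, hkL, hk⟩ : ∃ k ∈ Finset.range L,
      E ≤ L * ∑ s ∈ (A / A).filter (fun s => c s = k), rr A s ^ 2 := by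
    refine Finset.exists_le_of_sum_le ⟨0, Finset.mem_range.mpr (by omega)⟩ ?_
    calc ∑ _i ∈ Finset.range L, E = L * E := by
          rw [Finset.sum_const, Finset.card_range, smul_eq_mul]
      _ = ∑ i ∈ Finset.range L, L * ∑ s ∈ (A / A).filter (fun s => c s = i), rr A s ^ 2 := by
          rw [← Finset.mul_sum, hfib]
      _ ≤ ∑ i ∈ Finset.range L, L * ∑ s ∈ (A / A).filter (fun s => c s = i), rr A s ^ 2 :=
          le_rfl
  set C := (A / A).filter (fun s => c s = k) with hCdef
  set W := ∑ s ∈ C, rr A s ^ 2 with hW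
  have hCsub : C ⊆ A / A := Finset.filter_subset _ _
  have hclass : ∀ s ∈ C, 2 ^ k ≤ rr A s ∧ rr A s ≤ 2 ^ (k + 1) := by
    intro s hsC
    rw [hCdef, Finset.mem_filter] at hsC
    obtain ⟨hsQ, hck⟩ := hsC
    have h1 : 1 ≤ rr A s := rr_pos A hsQ
    have hrn : rr A s ≤ n := rr_le_card A hA s
    simp only [hc] at hck
    rcases le_or_gt (Nat.log 2 (rr A s)) (L - 1) with hle | hlt
    · have hk' : k = Nat.log 2 (rr A s) := by omega
      rw [hk']
      exact ⟨Nat.pow_log_le_self 2 (by omega),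
        (Nat.lt_pow_succ_log_self one_lt_two _).le⟩
    · have hk' : k = L - 1 := by omega
      constructor
      · calc 2 ^ k ≤ 2 ^ Nat.log 2 (rr A s) := Nat.pow_le_pow_right (by norm_num) (by omega)
          _ ≤ rr A s := Nat.pow_log_le_self 2 (by omega)
      · calc rr A s ≤ n := hrn
          _ ≤ 2 ^ L := hn2L
          _ ≤ 2 ^ (k + 1) := Nat.pow_le_pow_right (by norm_num) (by omega)
  have hWpos : 0 < W := by
    rcases Nat.eq_zero_or_pos W with h | h
    · rw [h, mul_zero] at hk; omega
    · exact h
  have hCne : C.Nonempty := by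
    by_contra hC
    rw [Finset.not_nonempty_iff_eq_empty] at hC
    have : W = 0 := by rw [hW, hC, Finset.sum_empty]
    omega
  have hW4 : W ≤ 4 * S ^ 2 := by
    have hC1 : C.card = 1 ∨ 2 ≤ C.card := by
      have := Finset.card_pos.mpr hCne; omega
    rcases hC1 with h1 | h1
    · obtain ⟨s, hs⟩ := Finset.card_eq_one.mp h1
      have : W = rr A s ^ 2 := by rw [hW, hs, Finset.sum_singleton]
      have h2' : rr A s ^ 2 ≤ S ^ 2 :=
        Nat.pow_le_pow_left ((rr_le_card A hA s).trans hnS) 2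
      omega
    · -- the main case: at least two slopes in the class
      set M := C.max' hCne with hM
      set m0 := C.min' hCne with hm0
      have hmM : m0 < M := Finset.min'_lt_max'_of_card C h1
      set C' := C.erase M with hC'
      have hC'sub : C' ⊆ C := Finset.erase_subset _ _
      have hNex : ∀ s ∈ C', (C.filter (fun t => s < t)).Nonempty := by
        intro s hs
        exact ⟨M, Finset.mem_filter.mpr ⟨Finset.max'_mem _ _,
          lt_of_le_of_ne (Finset.le_max' C s (hC'sub hs)) (Finset.ne_of_mem_erase hs)⟩⟩
      set N : ℝ → ℝ := fun s =>
        if h : (C.filter (fun t => s < t)).Nonempty then (C.filter (fun t => s < t)).min' h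
        else 0 with hNdef
      have hNmem : ∀ s ∈ C', N s ∈ C := by
        intro s hs
        simp only [hNdef, dif_pos (hNex s hs)]
        exact (Finset.mem_filter.mp (Finset.min'_mem _ _)).1
      have hNgt : ∀ s ∈ C', s < N s := by
        intro s hs
        simp only [hNdef, dif_pos (hNex s hs)]
        exact (Finset.mem_filter.mp (Finset.min'_mem _ _)).2
      have hNle : ∀ s ∈ C', ∀ t ∈ C, s < t → N s ≤ t := by
        intro s hs t ht hst
        simp only [hNdef, dif_pos (hNex s hs)]
        exact Finset.min'_le _ _ (Finset.mem_filter.mpr ⟨ht, hst⟩)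
      have key : ∀ a ∈ C', ∀ b ∈ C', a < b →
          Disjoint (Pt A a + Pt A (N a)) (Pt A b + Pt A (N b)) := by
        intro a ha b hb hab
        rw [Finset.disjoint_left]
        intro p hpa hpb
        have h1' := slope_between A hA (hNgt a ha) hpa
        have h2' := slope_between A hA (hNgt b hb) hpb
        have h3' := hNle a ha b (hC'sub hb) hab
        linarith [h1'.2, h2'.1]
      have hsumU : ∑ s ∈ C', rr A s * rr A (N s) ≤ S ^ 2 := by
        calc ∑ s ∈ C', rr A s * rr A (N s)
            = ∑ s ∈ C', (Pt A s + Pt A (N s)).card :=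
              Finset.sum_congr rfl fun s hs =>
                (card_Pt_add A hA (ne_of_lt (hNgt s hs))).symm
          _ = (C'.biUnion (fun s => Pt A s + Pt A (N s))).card := by
              rw [Finset.card_biUnion]
              intro a ha b hb hab
              rcases lt_or_gt_of_ne hab with h | h
              · exact key a ha b hb h
              · exact (key b hb a ha h).symm
          _ ≤ ((A + A) ×ˢ (A + A)).card :=
              Finset.card_le_card
                (Finset.biUnion_subset.mpr fun s _ => Pt_add_subset A)
          _ = S ^ 2 := by rw [Finset.card_product, sq]
      have hquad : ∀ s ∈ C', rr A s ^ 2 + rr A (N s) ^ 2 ≤ 4 * (rr A s * rr A (N s)) := by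
        intro s hs
        obtain ⟨ha1, ha2⟩ := hclass s (hC'sub hs)
        obtain ⟨hb1, hb2⟩ := hclass (N s) (hNmem s hs)
        have e : 2 ^ (k + 1) = 2 * 2 ^ k := by ring
        nlinarith [ha1, ha2, hb1, hb2]
      have hinjN : ∀ a ∈ C', ∀ b ∈ C', N a = N b → a = b := by
        intro a ha b hb hab
        by_contra hne
        rcases lt_or_gt_of_ne hne with h | h
        · have h4' := hNle a ha b (hC'sub hb) h
          have h5' := hNgt b hb
          linarith [hab.ge]
        · have h4' := hNle b hb a (hC'sub ha) h
          have h5' := hNgt a ha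
          linarith [hab.le]
      have himg : C'.image N = C.erase m0 := by
        apply Finset.eq_of_subset_of_card_le
        · intro t ht
          obtain ⟨s, hs, rfl⟩ := Finset.mem_image.mp ht
          refine Finset.mem_erase.mpr ⟨?_, hNmem s hs⟩
          have h6' : m0 ≤ s := Finset.min'_le C s (hC'sub hs)
          exact ne_of_gt (lt_of_le_of_lt h6' (hNgt s hs))
        · rw [Finset.card_erase_of_mem (Finset.min'_mem C hCne),
            Finset.card_image_of_injOn (fun a ha b hb => hinjN a ha b hb),
            hC', Finset.card_erase_of_mem (Finset.max'_mem C hCne)]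
      have hsum1 : ∑ s ∈ C', rr A s ^ 2 + rr A M ^ 2 = W :=
        Finset.sum_erase_add C _ (Finset.max'_mem C hCne)
      have hsum2 : ∑ s ∈ C', rr A (N s) ^ 2 + rr A m0 ^ 2 = W := by
        have := Finset.sum_image (f := fun t => rr A t ^ 2) (g := N) hinjN
        rw [himg] at this
        rw [← this]
        exact Finset.sum_erase_add C _ (Finset.min'_mem C hCne)
      have hmm : rr A M ^ 2 + rr A m0 ^ 2 ≤ W := by
        have hne : M ≠ m0 := ne_of_gt hmM
        calc rr A M ^ 2 + rr A m0 ^ 2 = ∑ s ∈ ({M, m0} : Finset ℝ), rr A s ^ 2 := by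
              rw [Finset.sum_pair hne]
          _ ≤ W := Finset.sum_le_sum_of_subset (by
              intro t ht
              rcases Finset.mem_insert.mp ht with h | h
              · rw [h]; exact Finset.max'_mem C hCne
              · rw [Finset.mem_singleton.mp h]; exact Finset.min'_mem C hCne)
      have hsum3 : ∑ s ∈ C', (rr A s ^ 2 + rr A (N s) ^ 2) ≤ 4 * S ^ 2 := by
        calc ∑ s ∈ C', (rr A s ^ 2 + rr A (N s) ^ 2)
            ≤ ∑ s ∈ C', 4 * (rr A s * rr A (N s)) := Finset.sum_le_sum hquad
          _ = 4 * ∑ s ∈ C', rr A s * rr A (N s) := by rw [Finset.mul_sum]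
          _ ≤ 4 * S ^ 2 := by omega
      have hsplit : ∑ s ∈ C', (rr A s ^ 2 + rr A (N s) ^ 2)
          + (rr A M ^ 2 + rr A m0 ^ 2) = 2 * W := by
        rw [Finset.sum_add_distrib]
        omega
      omega
  calc n ^ 4 ≤ (A * A).card * E := hCS
    _ ≤ (A * A).card * (L * W) := Nat.mul_le_mul_left _ hk
    _ ≤ (A * A).card * (L * (4 * S ^ 2)) :=
        Nat.mul_le_mul_left _ (Nat.mul_le_mul_left _ hW4)
    _ = 4 * L * ((A * A).card * S ^ 2) := by ring

theorem stmt_19 (A : Finset ℝ) (hA : ∀ a ∈ A, 0 < a) (h2 : 2 ≤ A.card) (ε : ℝ)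
    (hAA : ((A * A).card : ℝ) ≤ (A.card : ℝ) ^ ((1 : ℝ) + ε)) :
    ((A + A).card : ℝ) ≥
      (A.card : ℝ) ^ (((3 : ℝ) - ε) / 2) /
        (2 * (Nat.clog 2 A.card : ℝ) ^ ((1 : ℝ) / 2)) := by
  have hsol := solymosi A hA h2
  set nR : ℝ := (A.card : ℝ) with hnR
  set LR : ℝ := (Nat.clog 2 A.card : ℝ) with hLR
  set SR : ℝ := ((A + A).card : ℝ) with hSR
  have hn2 : (2 : ℝ) ≤ nR := by simp only [hnR]; exact_mod_cast h2
  have hnpos : (0 : ℝ) < nR := by linarith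
  have hL1 : (1 : ℝ) ≤ LR := by
    have := Nat.clog_pos one_lt_two h2
    simp only [hLR]
    exact_mod_cast this
  have hLpos : (0 : ℝ) < LR := by linarith
  have hAApos : (0 : ℝ) < ((A * A).card : ℝ) := by
    have : (A * A).Nonempty :=
      (Finset.card_pos.mp (by omega)).mul (Finset.card_pos.mp (by omega))
    exact_mod_cast Finset.card_pos.mpr this
  have hcast : nR ^ (4 : ℕ) ≤ 4 * LR * (((A * A).card : ℝ) * SR ^ 2) := by
    simp only [hnR, hLR, hSR]
    exact_mod_cast hsol
  have key : nR ^ ((3 : ℝ) - ε) ≤ 4 * LR * SR ^ 2 := by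
    have hmul : nR ^ ((3 : ℝ) - ε) * nR ^ ((1 : ℝ) + ε) = nR ^ (4 : ℕ) := by
      rw [← Real.rpow_add hnpos, ← Real.rpow_natCast]
      norm_num
    have h1 : nR ^ ((3 : ℝ) - ε) * ((A * A).card : ℝ) ≤
        (4 * LR * SR ^ 2) * ((A * A).card : ℝ) := by
      calc nR ^ ((3 : ℝ) - ε) * ((A * A).card : ℝ)
          ≤ nR ^ ((3 : ℝ) - ε) * nR ^ ((1 : ℝ) + ε) := by
            exact mul_le_mul_of_nonneg_left hAA (Real.rpow_nonneg hnpos.le _)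
        _ = nR ^ (4 : ℕ) := hmul
        _ ≤ 4 * LR * (((A * A).card : ℝ) * SR ^ 2) := hcast
        _ = (4 * LR * SR ^ 2) * ((A * A).card : ℝ) := by ring
    exact le_of_mul_le_mul_right h1 hAApos
  have hden : (0 : ℝ) < 2 * LR ^ ((1 : ℝ) / 2) := by
    have := Real.rpow_pos_of_pos hLpos ((1 : ℝ) / 2)
    linarith
  rw [ge_iff_le, div_le_iff₀ hden]
  have hhalf : LR ^ ((1 : ℝ) / 2) * LR ^ ((1 : ℝ) / 2) = LR := by
    rw [← Real.rpow_add hLpos]; norm_num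
  have hsq : (nR ^ (((3 : ℝ) - ε) / 2)) ^ 2 ≤ (SR * (2 * LR ^ ((1 : ℝ) / 2))) ^ 2 := by
    have e1 : (nR ^ (((3 : ℝ) - ε) / 2)) ^ 2 = nR ^ ((3 : ℝ) - ε) := by
      rw [← Real.rpow_natCast (nR ^ (((3 : ℝ) - ε) / 2)) 2, ← Real.rpow_mul hnpos.le]
      norm_num
    have e2 : (SR * (2 * LR ^ ((1 : ℝ) / 2))) ^ 2 = 4 * LR * SR ^ 2 := by
      have : (LR ^ ((1 : ℝ) / 2)) ^ 2 = LR := by rw [sq, hhalf]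
      nlinarith [this]
    rw [e1, e2]
    exact key
  have hS0 : (0 : ℝ) ≤ SR * (2 * LR ^ ((1 : ℝ) / 2)) := by
    have : (0 : ℝ) ≤ SR := by positivity
    positivity
  exact (pow_le_pow_iff_left₀ (Real.rpow_nonneg hnpos.le _) hS0 (by norm_num)).mp hsq
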